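/- Let n ∈ ℕ and let M be a metric space with d(x,y) ∈ {0,1,…,n} for all x,y ∈ M. Let μ be a bounded, nonnegative, finitely additive set function defined on all subsets of M̃ (i.e., μ(∅) = 0 and μ(A ∪ B) = μ(A) + μ(B) whenever A, B are disjoint), let γ ∈ (0,1), and let A be a γ-cyclically monotonic subset of M̃. Then there exists a cyclically monotonic subset B of A with μ(B) ≥ μ(A) − 2n(1−γ)·μ(M̃). -/

import Mathlib

/-- The set `M̃ = {(x,y) : x ≠ y}` as a subtype. -/
def Mt (M : Type*) : Type _ := {p : M × M // p.1 ≠ p.2}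

variable {M : Type*} [MetricSpace M]

/-- `A ⊆ M̃` is `γ`-cyclically monotonic. -/
def GammaCM (γ : ℝ) (A : Set (Mt M)) : Prop :=
  ∀ (n : ℕ) (p : Fin (n + 1) → Mt M), (∀ i, p i ∈ A) →
    0 ≤ ∑ i : Fin (n + 1),
      min (dist (p i).1.1 (p (i + 1)).1.2 - γ * dist (p i).1.1 (p i).1.2)
          (dist (p i).1.2 (p (i + 1)).1.2)

/-- `A ⊆ M̃` is cyclically monotonic. -/
def CyclMono (A : Set (Mt M)) : Prop :=
  ∀ (n : ℕ) (p : Fin (n + 1) → Mt M), (∀ i, p i ∈ A) →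
    ∑ i : Fin (n + 1), dist (p i).1.1 (p i).1.2 ≤
      ∑ i : Fin (n + 1), dist (p i).1.1 (p (i + 1)).1.2


section Covering
variable {X : Type*} (μ : Set X → ℝ)

lemma mu_mono (hnonneg : ∀ A : Set X, 0 ≤ μ A)
    (hadd : ∀ A B : Set X, Disjoint A B → μ (A ∪ B) = μ A + μ B)
    {A B : Set X} (hAB : A ⊆ B) : μ A ≤ μ B := by
  have h1 : μ (A ∪ B \ A) = μ A + μ (B \ A) :=
    hadd A (B \ A) (Set.disjoint_left.mpr fun x hx hx' => hx'.2 hx)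
  rw [Set.union_diff_cancel hAB] at h1
  have := hnonneg (B \ A)
  linarith

lemma mu_biUnion {ι : Type*} (hempty : μ ∅ = 0)
    (hadd : ∀ A B : Set X, Disjoint A B → μ (A ∪ B) = μ A + μ B)
    (s : Finset ι) (T : ι → Set X)
    (hdisj : ∀ i ∈ s, ∀ j ∈ s, i ≠ j → Disjoint (T i) (T j)) :
    μ (⋃ j ∈ s, T j) = ∑ j ∈ s, μ (T j) := by
  classical
  induction s using Finset.induction_on with
  | empty => simpa using hempty
  | @insert a s ha ih =>
    rw [Finset.sum_insert ha, Finset.set_biUnion_insert]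
    rw [hadd _ _ ?_, ih ?_]
    · intro i hi j hj hij
      exact hdisj i (Finset.mem_insert_of_mem hi) j (Finset.mem_insert_of_mem hj) hij
    · rw [Set.disjoint_iUnion_right]
      intro i
      rw [Set.disjoint_iUnion_right]
      intro hi
      exact hdisj a (Finset.mem_insert_self a s) i (Finset.mem_insert_of_mem hi)
        (fun h => ha (h ▸ hi))

lemma covering {K : ℕ} (hnonneg : ∀ A : Set X, 0 ≤ μ A)
    (hempty : μ ∅ = 0)
    (hadd : ∀ A B : Set X, Disjoint A B → μ (A ∪ B) = μ A + μ B)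
    (S : Fin K → Set X) (m : ℕ)
    (hcount : ∀ (x : X) (t : Finset (Fin K)), (∀ j ∈ t, x ∈ S j) → t.card ≤ m) :
    ∑ j, μ (S j) ≤ m * μ Set.univ := by
  classical
  induction m generalizing S with
  | zero =>
    have hSe : ∀ j, S j = ∅ := by
      intro j
      rw [Set.eq_empty_iff_forall_notMem]
      intro x hx
      have := hcount x {j} (by simpa using hx)
      simp at this
    simp [hSe, hempty]
  | succ m ih =>
    set U : Fin K → Set X := fun j => ⋃ i ∈ Finset.univ.filter (· < j), S i with hU
    set D : Fin K → Set X := fun j => S j \ U j with hD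
    set S' : Fin K → Set X := fun j => S j ∩ U j with hS'
    have hsplit : ∀ j, μ (S j) = μ (D j) + μ (S' j) := by
      intro j
      rw [← hadd _ _ Set.disjoint_sdiff_inter, Set.diff_union_inter]
    have hDdisj : ∀ i ∈ (Finset.univ : Finset (Fin K)), ∀ j ∈ Finset.univ, i ≠ j →
        Disjoint (D i) (D j) := by
      intro i _ j _ hij
      rcases Ne.lt_or_gt hij with hlt | hlt
      · rw [Set.disjoint_left]
        intro x hxi hxj
        exact hxj.2 (Set.mem_biUnion (Finset.mem_filter.mpr ⟨Finset.mem_univ _, hlt⟩) hxi.1)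
      · rw [Set.disjoint_left]
        intro x hxi hxj
        exact hxi.2 (Set.mem_biUnion (Finset.mem_filter.mpr ⟨Finset.mem_univ _, hlt⟩) hxj.1)
    have hDsum : ∑ j, μ (D j) ≤ μ Set.univ := by
      rw [← mu_biUnion μ hempty hadd Finset.univ D hDdisj]
      exact mu_mono μ hnonneg hadd (Set.subset_univ _)
    have hcount' : ∀ (x : X) (t : Finset (Fin K)), (∀ j ∈ t, x ∈ S' j) → t.card ≤ m := by
      intro x t ht
      rcases t.eq_empty_or_nonempty with rfl | htne
      · simp
      · set j1 := t.min' htne with hj1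
        have hj1t : j1 ∈ t := t.min'_mem htne
        have hxU : x ∈ U j1 := (ht j1 hj1t).2
        obtain ⟨i, hi, hxi⟩ := Set.mem_iUnion₂.mp hxU
        have hilt : i < j1 := (Finset.mem_filter.mp hi).2
        have hinot : i ∉ t := fun hit => absurd (t.min'_le i hit) (not_le.mpr hilt)
        have hbig := hcount x (insert i t) ?_
        · rw [Finset.card_insert_of_notMem hinot] at hbig
          omega
        · intro j hj
          rcases Finset.mem_insert.mp hj with rfl | hjt
          · exact hxi
          · exact (ht j hjt).1
    have hrec := ih S' hcount'
    have heq : ∑ j, μ (S j) = ∑ j, μ (D j) + ∑ j, μ (S' j) := by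
      rw [← Finset.sum_add_distrib]
      exact Finset.sum_congr rfl fun j _ => hsplit j
    push_cast
    linarith

end Covering

noncomputable def Fc (γ : ℝ) (p : Mt M) (z : M) : ℝ :=
  min (dist p.1.1 z - γ * dist p.1.1 p.1.2) (dist p.1.2 z)

noncomputable def Vc (γ : ℝ) {m : ℕ} (q : Fin (m+1) → Mt M) (z : M) : ℝ :=
  (∑ i : Fin m, Fc γ (q i.castSucc) (q i.succ).1.2) + Fc γ (q (Fin.last m)) z

lemma Fc_lip (γ : ℝ) (p : Mt M) (z w : M) : Fc γ p z ≤ Fc γ p w + dist w z := by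
  unfold Fc
  rw [← min_add_add_right]
  refine min_le_min ?_ ?_
  · have := dist_triangle p.1.1 w z; linarith
  · have := dist_triangle p.1.2 w z; linarith

lemma Vc_lip (γ : ℝ) {m : ℕ} (q : Fin (m+1) → Mt M) (z w : M) :
    Vc γ q z ≤ Vc γ q w + dist w z := by
  unfold Vc
  have := Fc_lip γ (q (Fin.last m)) z w
  linarith

lemma Vc_cycle (γ : ℝ) {m : ℕ} (q : Fin (m+1) → Mt M) :
    Vc γ q (q 0).1.2 = ∑ i : Fin (m+1), Fc γ (q i) (q (i+1)).1.2 := by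
  rw [Fin.sum_univ_castSucc]
  unfold Vc
  congr 1
  · refine Finset.sum_congr rfl fun i _ => ?_
    rw [Fin.coeSucc_eq_succ]
  · rw [Fin.last_add_one]

lemma Vc_snoc (γ : ℝ) {m : ℕ} (q : Fin (m+1) → Mt M) (r : Mt M) (z : M) :
    Vc γ (Fin.snoc q r) z = Vc γ q r.1.2 + Fc γ r z := by
  unfold Vc
  rw [Fin.sum_univ_castSucc]
  have h1 : ∀ i : Fin m,
      Fc γ ((Fin.snoc q r : Fin (m+2) → Mt M) i.castSucc.castSucc)
        (((Fin.snoc q r : Fin (m+2) → Mt M) i.castSucc.succ)).1.2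
      = Fc γ (q i.castSucc) (q i.succ).1.2 := by
    intro i
    rw [Fin.succ_castSucc, Fin.snoc_castSucc, Fin.snoc_castSucc]
  rw [Finset.sum_congr rfl fun i _ => h1 i]
  have h2 : ((Fin.snoc q r : Fin (m+2) → Mt M) (Fin.last m).castSucc) = q (Fin.last m) :=
    Fin.snoc_castSucc ..
  have h3 : ((Fin.snoc q r : Fin (m+2) → Mt M) (Fin.last m).succ) = r := by
    rw [Fin.succ_last, Fin.snoc_last]
  have h4 : ((Fin.snoc q r : Fin (m+2) → Mt M) (Fin.last (m+1))) = r := Fin.snoc_last ..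
  rw [h2, h3, h4]

lemma exists_potential {γ : ℝ} (hγ0 : 0 < γ) (n : ℕ)
    (hdle : ∀ z w : M, dist z w ≤ (n : ℝ))
    (A : Set (Mt M)) (hA : GammaCM γ A) (p0 : Mt M) (hp0 : p0 ∈ A) :
    ∃ h : M → ℝ, (∀ z w, h z - h w ≤ dist z w) ∧
      ∀ p ∈ A, γ * dist p.1.1 p.1.2 ≤ h p.1.1 - h p.1.2 := by
  set S : M → Set ℝ := fun z =>
    {v | ∃ (m : ℕ) (q : Fin (m+1) → Mt M), (∀ i, q i ∈ A) ∧ Vc γ q z = v} with hS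
  have hSne : ∀ z, (S z).Nonempty := fun z =>
    ⟨Vc γ (fun _ => p0) z, 0, fun _ => p0, fun _ => hp0, rfl⟩
  have hcyc : ∀ (m : ℕ) (q : Fin (m+1) → Mt M), (∀ i, q i ∈ A) →
      0 ≤ Vc γ q (q 0).1.2 := by
    intro m q hq
    rw [Vc_cycle]
    exact hA m q hq
  have hbddb : ∀ z, ∀ v ∈ S z, -(n : ℝ) ≤ v := by
    rintro z v ⟨m, q, hq, rfl⟩
    have h1 := hcyc m q hq
    have h2 := Vc_lip γ q (q 0).1.2 z
    have h3 := hdle z (q 0).1.2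
    linarith
  have hBdd : ∀ z, BddBelow (S z) := fun z => ⟨-(n : ℝ), fun v hv => hbddb z v hv⟩
  set f : M → ℝ := fun z => sInf (S z) with hf
  have hf_le : ∀ (z : M) (v : ℝ), v ∈ S z → f z ≤ v := fun z v hv => csInf_le (hBdd z) hv
  have hf_lip : ∀ z w, f z ≤ f w + dist w z := by
    intro z w
    have key : ∀ v ∈ S w, f z - dist w z ≤ v := by
      rintro v ⟨m, q, hq, rfl⟩
      have h1 : f z ≤ Vc γ q z := hf_le z _ ⟨m, q, hq, rfl⟩
      have h2 := Vc_lip γ q z w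
      linarith
    have := le_csInf (hSne w) (fun v hv => key v hv)
    linarith
  have hf_key : ∀ p ∈ A, f p.1.1 + γ * dist p.1.1 p.1.2 ≤ f p.1.2 := by
    intro r hr
    have key : ∀ v ∈ S r.1.2, f r.1.1 + γ * dist r.1.1 r.1.2 ≤ v := by
      rintro v ⟨m, q, hq, rfl⟩
      have hmem : ∀ i, (Fin.snoc q r : Fin (m+2) → Mt M) i ∈ A := by
        intro i
        induction i using Fin.lastCases with
        | last => rw [Fin.snoc_last]; exact hr
        | cast i => rw [Fin.snoc_castSucc]; exact hq i
      have h1 : f r.1.1 ≤ Vc γ (Fin.snoc q r) r.1.1 :=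
        hf_le _ _ ⟨m + 1, _, hmem, rfl⟩
      rw [Vc_snoc] at h1
      have h2 : Fc γ r r.1.1 = -(γ * dist r.1.1 r.1.2) := by
        unfold Fc
        rw [dist_self, zero_sub]
        rw [dist_comm r.1.2 r.1.1]
        exact min_eq_left
          (le_trans (neg_nonpos.mpr (mul_nonneg hγ0.le dist_nonneg)) dist_nonneg)
      rw [h2] at h1
      linarith
    have := le_csInf (hSne r.1.2) (fun v hv => key v hv)
    linarith
  refine ⟨fun z => -f z, fun z w => ?_, fun p hp => ?_⟩
  · have := hf_lip w z
    simp only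
    linarith
  · have := hf_key p hp
    simp only
    linarith

theorem stmt3 (n : ℕ) (hd : ∀ x y : M, ∃ k : ℕ, k ≤ n ∧ dist x y = k)
    (μ : Set (Mt M) → ℝ)
    (hnonneg : ∀ A : Set (Mt M), 0 ≤ μ A)
    (hbdd : ∃ C : ℝ, ∀ A : Set (Mt M), μ A ≤ C)
    (hempty : μ ∅ = 0)
    (hadd : ∀ A B : Set (Mt M), Disjoint A B → μ (A ∪ B) = μ A + μ B)
    {γ : ℝ} (hγ0 : 0 < γ) (hγ1 : γ < 1)
    (A : Set (Mt M)) (hA : GammaCM γ A) :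
    ∃ B ⊆ A, CyclMono B ∧ μ A - 2 * n * (1 - γ) * μ Set.univ ≤ μ B := by
  by_cases hAne : A.Nonempty
  case neg =>
    refine ⟨∅, Set.empty_subset _, ?_, ?_⟩
    · intro m p hp
      exact absurd (hp 0) (Set.notMem_empty _)
    · rw [Set.not_nonempty_iff_eq_empty] at hAne
      rw [hAne, hempty]
      have h1 : (0:ℝ) ≤ 2 * (n:ℝ) * (1 - γ) * μ Set.univ :=
        mul_nonneg (mul_nonneg (mul_nonneg (by norm_num) (Nat.cast_nonneg n))
          (by linarith)) (hnonneg _)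
      linarith
  case pos =>
  obtain ⟨p0, hp0⟩ := hAne
  -- basic facts
  have hdle : ∀ z w : M, dist z w ≤ (n : ℝ) := by
    intro z w
    obtain ⟨k, hk, he⟩ := hd z w
    rw [he]
    exact_mod_cast hk
  have hkpos : ∀ p : Mt M, ∀ k : ℕ, dist p.1.1 p.1.2 = k → 1 ≤ k := by
    intro p k hk
    rcases Nat.eq_zero_or_pos k with rfl | h
    · exfalso
      have : dist p.1.1 p.1.2 = 0 := by rw [hk]; norm_num
      exact p.2 (dist_eq_zero.mp this)
    · exact h
  have hn1 : 1 ≤ n := by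
    obtain ⟨k, hk, he⟩ := hd p0.1.1 p0.1.2
    exact le_trans (hkpos p0 k he) hk
  obtain ⟨h, hlip, hkey⟩ := exists_potential hγ0 n hdle A hA p0 hp0
  set ε : ℝ := (1 - γ) * n with hεdef
  have hε : 0 < ε := by
    have : (0:ℝ) < n := by exact_mod_cast hn1
    have : (0:ℝ) < 1 - γ := by linarith
    positivity
  set K : ℕ := ⌈2 / ε⌉₊ with hKdef
  have hKpos : 0 < K := Nat.ceil_pos.mpr (by positivity)
  have hKposR : (0:ℝ) < K := by exact_mod_cast hKpos
  have hK2 : 2 ≤ (K:ℝ) * ε := by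
    have h1 : 2 / ε ≤ (K:ℝ) := Nat.le_ceil _
    calc (2:ℝ) = 2 / ε * ε := by field_simp
      _ ≤ (K:ℝ) * ε := mul_le_mul_of_nonneg_right h1 hε.le
  set g : Fin K → M → ℝ :=
    fun j z => ((⌈h z - (j.val : ℝ) / (K:ℝ)⌉ : ℤ) : ℝ) with hgdef
  have hglip : ∀ (j : Fin K) (x y : M), g j x - g j y ≤ dist x y := by
    intro j x y
    obtain ⟨k, hkn, hdxy⟩ := hd x y
    rw [hdxy]
    have h1 : h x - (j.val : ℝ) / K ≤ h y - (j.val : ℝ) / K + (k : ℤ) := by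
      have := hlip x y
      rw [hdxy] at this
      push_cast
      linarith
    have h2 : ⌈h x - (j.val : ℝ) / K⌉ ≤ ⌈h y - (j.val : ℝ) / K⌉ + (k : ℤ) := by
      rw [← Int.ceil_add_intCast]
      exact Int.ceil_le_ceil h1
    simp only [hgdef]
    push_cast
    exact_mod_cast sub_le_iff_le_add'.mpr (by exact_mod_cast h2.trans_eq (by ring))
  set Good : Fin K → Set (Mt M) :=
    fun j => {p : Mt M | dist p.1.1 p.1.2 ≤ g j p.1.1 - g j p.1.2} with hGood
  have hCM : ∀ j, CyclMono (A ∩ Good j) := by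
    intro j m p hp
    have hstep1 : ∀ i : Fin (m+1), dist (p i).1.1 (p i).1.2 ≤
        g j (p i).1.1 - g j (p i).1.2 := fun i => (hp i).2
    have hre : ∑ i : Fin (m+1), g j ((p (i+1)).1.2) = ∑ i : Fin (m+1), g j ((p i).1.2) :=
      Fintype.sum_equiv (Equiv.addRight (1 : Fin (m+1))) _ _ (fun i => rfl)
    calc ∑ i : Fin (m+1), dist (p i).1.1 (p i).1.2
        ≤ ∑ i : Fin (m+1), (g j (p i).1.1 - g j (p i).1.2) :=
          Finset.sum_le_sum (fun i _ => hstep1 i)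
      _ = ∑ i : Fin (m+1), g j (p i).1.1 - ∑ i : Fin (m+1), g j ((p i).1.2) :=
          Finset.sum_sub_distrib _ _
      _ = ∑ i : Fin (m+1), g j (p i).1.1 - ∑ i : Fin (m+1), g j ((p (i+1)).1.2) := by
          rw [hre]
      _ = ∑ i : Fin (m+1), (g j (p i).1.1 - g j ((p (i+1)).1.2)) :=
          (Finset.sum_sub_distrib _ _).symm
      _ ≤ ∑ i : Fin (m+1), dist (p i).1.1 ((p (i+1)).1.2) :=
          Finset.sum_le_sum (fun i _ => hglip j _ _)
  set Bd : Fin K → Set (Mt M) := fun j => A \ Good j with hBd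
  set m0 : ℕ := ⌈(K:ℝ) * ε⌉₊ + 1 with hm0def
  have hcount : ∀ (p : Mt M) (t : Finset (Fin K)), (∀ j ∈ t, p ∈ Bd j) → t.card ≤ m0 := by
    intro p t ht
    by_cases hpA : p ∈ A
    case neg =>
      rcases t.eq_empty_or_nonempty with rfl | ⟨j, hj⟩
      · simp
      · exact absurd (ht j hj).1 hpA
    case pos =>
    obtain ⟨k, hkn, hdxy⟩ := hd p.1.1 p.1.2
    have hk1 : 1 ≤ k := hkpos p k hdxy
    have hkeyp : γ * k ≤ h p.1.1 - h p.1.2 := by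
      have := hkey p hpA
      rw [hdxy] at this
      exact this
    set x := p.1.1
    set y := p.1.2
    set Ψ : Fin K → ℤ := fun j => (K:ℤ) * ⌈h y - (j.val : ℝ) / K⌉ + j.val with hΨ
    set lo : ℤ := ⌈(K:ℝ) * (h x + 1 - k)⌉ with hlo
    set hi : ℤ := ⌈(K:ℝ) * (h y + 1)⌉ - 1 with hhi
    have hbad : ∀ j ∈ t, h x - (j.val : ℝ) / K ≤ (⌈h y - (j.val : ℝ) / K⌉ : ℝ) + k - 1 := by
      intro j hj
      have hb := (ht j hj).2
      simp only [hGood, Set.mem_setOf_eq, not_le] at hb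
      rw [hdxy] at hb
      simp only [hgdef] at hb
      have hb2 : (⌈h x - (j.val : ℝ) / K⌉ : ℤ) < ⌈h y - (j.val : ℝ) / K⌉ + (k:ℤ) := by
        exact_mod_cast (by push_cast; linarith : ((⌈h x - (j.val : ℝ) / K⌉ : ℤ) : ℝ) <
          ((⌈h y - (j.val : ℝ) / K⌉ + (k:ℤ) : ℤ) : ℝ))
      have hb3 : (⌈h x - (j.val : ℝ) / K⌉ : ℤ) ≤ ⌈h y - (j.val : ℝ) / K⌉ + (k:ℤ) - 1 := by
        omega
      have hb4 := Int.ceil_le.mp hb3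
      push_cast at hb4 ⊢
      linarith
    have hmaps : ∀ j ∈ t, Ψ j ∈ Finset.Icc lo hi := by
      intro j hj
      have hb := hbad j hj
      have hjK : (K:ℝ) * ((j.val : ℝ) / K) = (j.val : ℝ) := by field_simp
      rw [Finset.mem_Icc]
      constructor
      · rw [hlo]
        apply Int.ceil_le.mpr
        have h6 : (K:ℝ) * (h x + 1 - k - (j.val : ℝ)/K) ≤
            (K:ℝ) * (⌈h y - (j.val : ℝ)/K⌉ : ℝ) :=
          mul_le_mul_of_nonneg_left (by linarith) hKposR.le
        have h7 : (K:ℝ) * (h x + 1 - k - (j.val : ℝ)/K) =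
            (K:ℝ) * (h x + 1 - k) - (j.val : ℝ) := by
          rw [mul_sub, hjK]
        simp only [hΨ]
        push_cast
        linarith
      · have h8 : (⌈h y - (j.val : ℝ)/K⌉ : ℝ) < h y - (j.val : ℝ)/K + 1 :=
          Int.ceil_lt_add_one _
        have h9 := mul_lt_mul_of_pos_left h8 hKposR
        have h10 : (K:ℝ) * (h y - (j.val : ℝ)/K + 1) = (K:ℝ) * (h y + 1) - (j.val : ℝ) := by
          rw [mul_add, mul_sub, hjK]
          ring
        have h11 : ((Ψ j : ℤ) : ℝ) < (K:ℝ) * (h y + 1) := by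
          simp only [hΨ]
          push_cast
          linarith
        have h12 : Ψ j < ⌈(K:ℝ) * (h y + 1)⌉ := Int.lt_ceil.mpr h11
        rw [hhi]
        omega
    have hinj : Set.InjOn Ψ t := by
      intro j hj j' hj' heq
      simp only [hΨ] at heq
      by_cases haa : ⌈h y - (j.val : ℝ)/K⌉ = ⌈h y - (j'.val : ℝ)/K⌉
      · rw [haa] at heq
        have : (j.val : ℤ) = j'.val := by omega
        exact Fin.ext (by exact_mod_cast this)
      · exfalso
        have h5 : (j.val : ℤ) - j'.val =
            (K:ℤ) * (⌈h y - (j'.val : ℝ)/K⌉ - ⌈h y - (j.val : ℝ)/K⌉) := by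
          linear_combination heq
        have h6 : (1:ℤ) ≤ |⌈h y - (j'.val : ℝ)/K⌉ - ⌈h y - (j.val : ℝ)/K⌉| :=
          Int.one_le_abs (sub_ne_zero.mpr (Ne.symm haa))
        have hjlt := j.isLt
        have hjlt' := j'.isLt
        have h7 : |(j.val : ℤ) - j'.val| < K := by
          rw [abs_lt]
          omega
        rw [h5, abs_mul, abs_of_nonneg (by positivity : (0:ℤ) ≤ (K:ℤ))] at h7
        nlinarith
    have hcard := Finset.card_le_card_of_injOn Ψ hmaps hinj
    have hIcc : (Finset.Icc lo hi).card = (hi + 1 - lo).toNat := Int.card_Icc lo hi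
    have hb1 : (K:ℝ) * (h x + 1 - k) ≤ (lo:ℝ) := Int.le_ceil _
    have hb2 : (hi:ℝ) < (K:ℝ) * (h y + 1) := by
      rw [hhi]
      push_cast
      linarith [Int.ceil_lt_add_one ((K:ℝ) * (h y + 1))]
    have hc1 : h y - h x + k ≤ ε := by
      rw [hεdef]
      have hkn' : (k:ℝ) ≤ n := Nat.cast_le.mpr hkn
      nlinarith [mul_le_mul_of_nonneg_left hkn' (by linarith : (0:ℝ) ≤ 1 - γ)]
    have hc2 : (K:ℝ) * (h y - h x + k) ≤ (K:ℝ) * ε :=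
      mul_le_mul_of_nonneg_left hc1 hKposR.le
    have hm0r : (K:ℝ) * ε + 1 ≤ (m0:ℝ) := by
      rw [hm0def]
      push_cast
      linarith [Nat.le_ceil ((K:ℝ) * ε)]
    have hexp : (K:ℝ) * (h y + 1) + 1 - (K:ℝ) * (h x + 1 - k) =
        (K:ℝ) * (h y - h x + k) + 1 := by ring
    have hc3 : ((hi + 1 - lo : ℤ) : ℝ) < (m0:ℝ) := by
      have hcast : ((hi + 1 - lo : ℤ) : ℝ) = (hi:ℝ) + 1 - (lo:ℝ) := by push_cast; ring
      rw [hcast]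
      linarith
    have hc4 : hi + 1 - lo < (m0:ℤ) := by exact_mod_cast hc3
    calc t.card ≤ (Finset.Icc lo hi).card := hcard
      _ = (hi + 1 - lo).toNat := hIcc
      _ ≤ m0 := by omega
  have hsum := covering μ hnonneg hempty hadd Bd m0 hcount
  haveI : Nonempty (Fin K) := Fin.pos_iff_nonempty.mp hKpos
  have hexj : ∃ j : Fin K, μ (Bd j) ≤ (m0:ℝ) * μ Set.univ / K := by
    by_contra hcon
    push_neg at hcon
    have h1 : ∑ _j : Fin K, ((m0:ℝ) * μ Set.univ / K) < ∑ j, μ (Bd j) :=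
      Finset.sum_lt_sum_of_nonempty Finset.univ_nonempty (fun j _ => hcon j)
    rw [Finset.sum_const, Finset.card_univ, Fintype.card_fin, nsmul_eq_mul] at h1
    have h2 : (K:ℝ) * ((m0:ℝ) * μ Set.univ / K) = (m0:ℝ) * μ Set.univ := by
      field_simp
    linarith
  obtain ⟨j, hj⟩ := hexj
  have hm0le : (m0:ℝ) ≤ 2 * ((K:ℝ) * ε) := by
    have h1 : (⌈(K:ℝ)*ε⌉₊ : ℝ) < (K:ℝ)*ε + 1 := Nat.ceil_lt_add_one (by positivity)
    rw [hm0def]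
    push_cast
    linarith
  have hμu := hnonneg Set.univ
  have hfinal : μ (Bd j) ≤ 2 * n * (1 - γ) * μ Set.univ := by
    have h2 : (m0:ℝ) * μ Set.univ / K ≤ 2 * ε * μ Set.univ := by
      rw [div_le_iff₀ hKposR]
      calc (m0:ℝ) * μ Set.univ ≤ 2*((K:ℝ)*ε) * μ Set.univ :=
            mul_le_mul_of_nonneg_right hm0le hμu
        _ = 2 * ε * μ Set.univ * K := by ring
    have h3 : 2 * ε * μ Set.univ = 2 * n * (1 - γ) * μ Set.univ := by
      rw [hεdef]
      ring
    linarith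
  refine ⟨A ∩ Good j, Set.inter_subset_left, hCM j, ?_⟩
  have hdisj : Disjoint (A ∩ Good j) (Bd j) :=
    Set.disjoint_left.mpr (fun q hq hq' => hq'.2 hq.2)
  have hsplit : μ A = μ (A ∩ Good j) + μ (Bd j) := by
    rw [← hadd _ _ hdisj]
    simp only [hBd]
    rw [Set.inter_union_diff]
  linarith
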